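/- Let ℓ: ℝ → ℝ be a gradient-symmetric function with constant c (ℓ'(v)+ℓ'(−v)=c), and write its even part ℓ_e(v) = (ℓ(v)+ℓ(−v))/2. Then for any random variable F with mean f* = E[F], E[B_ℓ(F, f*)] = E[ℓ_e(F)] − ℓ_e(f*). -/

import Mathlib

open MeasureTheory

/-- Variance of a gradient-symmetric loss as a Jensen gap of the even part. -/
theorem stmt16 {Ω : Type*} [MeasurableSpace Ω] (μ : Measure Ω) [IsProbabilityMeasure μ]
    (ℓ : ℝ → ℝ) (hd : Differentiable ℝ ℓ)
    (c : ℝ) (hgs : ∀ v : ℝ, deriv ℓ v + deriv ℓ (-v) = c)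
    (F : Ω → ℝ) (hF : Integrable F μ)
    (h1 : Integrable (fun ω => ℓ (F ω)) μ)
    (h2 : Integrable (fun ω => ℓ (-F ω)) μ) :
    ∫ ω, (ℓ (F ω) - ℓ (∫ ω', F ω' ∂μ)
        - deriv ℓ (∫ ω', F ω' ∂μ) * (F ω - ∫ ω', F ω' ∂μ)) ∂μ =
      (∫ ω, (ℓ (F ω) + ℓ (-F ω)) / 2 ∂μ)
        - (ℓ (∫ ω', F ω' ∂μ) + ℓ (-(∫ ω', F ω' ∂μ))) / 2 := by
  set m := ∫ ω', F ω' ∂μ with hm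
  -- key: ℓ(-v) = ℓ v - c * v
  have key : ∀ v : ℝ, ℓ (-v) = ℓ v - c * v := by
    have hdiff : Differentiable ℝ (fun v : ℝ => ℓ v - ℓ (-v) - c * v) :=
      ((hd.sub (hd.comp differentiable_neg)).sub (differentiable_id.const_mul c))
    have hz : ∀ x : ℝ, deriv (fun v : ℝ => ℓ v - ℓ (-v) - c * v) x = 0 := by
      intro x
      have h1' : HasDerivAt ℓ (deriv ℓ x) x := (hd x).hasDerivAt
      have h2' : HasDerivAt (fun v : ℝ => ℓ (-v)) (deriv ℓ (-x) * (-1)) x :=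
        ((hd (-x)).hasDerivAt.comp x (hasDerivAt_neg x))
      have h3' : HasDerivAt (fun v : ℝ => c * v) c x := by
        simpa using (hasDerivAt_id x).const_mul c
      have := ((h1'.sub h2').sub h3').deriv
      rw [show (fun v : ℝ => ℓ v - ℓ (-v) - c * v) = ((ℓ - fun v => ℓ (-v)) - fun v => c * v) from rfl, this]
      have := hgs x
      linarith
    have hc := is_const_of_deriv_eq_zero hdiff hz
    intro v
    have := hc v 0
    simp at this
    linarith
  have hderivz : deriv ℓ m * (m - m) = 0 := by simp
  have hint3 : Integrable (fun ω => deriv ℓ m * (F ω - m)) μ :=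
    ((hF.sub (integrable_const m)).const_mul _)
  have hlhs : (∫ ω, (ℓ (F ω) - ℓ m - deriv ℓ m * (F ω - m)) ∂μ)
      = (∫ ω, ℓ (F ω) ∂μ) - ℓ m := by
    have e1 : ∫ ω, (ℓ (F ω) - ℓ m - deriv ℓ m * (F ω - m)) ∂μ
        = (∫ ω, (ℓ (F ω) - ℓ m) ∂μ) - ∫ ω, deriv ℓ m * (F ω - m) ∂μ :=
      integral_sub (h1.sub (integrable_const _)) hint3
    have e2 : ∫ ω, (ℓ (F ω) - ℓ m) ∂μ = (∫ ω, ℓ (F ω) ∂μ) - ℓ m := by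
      rw [integral_sub h1 (integrable_const _), integral_const]; simp
    have e3 : ∫ ω, deriv ℓ m * (F ω - m) ∂μ = deriv ℓ m * (m - m) := by
      rw [integral_const_mul, integral_sub hF (integrable_const _), integral_const]
      simp [hm]
    rw [e1, e2, e3, hderivz]
    ring
  rw [hlhs]
  have hrhs : (∫ ω, (ℓ (F ω) + ℓ (-F ω)) / 2 ∂μ)
      = (∫ ω, ℓ (F ω) ∂μ) - c / 2 * m := by
    have : ∀ ω, (ℓ (F ω) + ℓ (-F ω)) / 2 = ℓ (F ω) - c / 2 * F ω := by
      intro ω; rw [key (F ω)]; ring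
    simp_rw [this]
    rw [integral_sub h1 (hF.const_mul _), integral_const_mul]
  rw [hrhs, key m]
  ring
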